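/- Let Σ be symmetric positive definite and Γ symmetric positive semidefinite, both m×m; let y^m, y, ȳ ∈ ℝ^m, and α ≥ 1. Then log det(Σ² + Γ)/det(Σ²) − ‖y^m − y‖²_{Σ^{-2}} + ‖y^m − ȳ‖²_{(Σ²+Γ)^{-1}} + 2 log α ≤ 2ψ, where ψ = (1/2)tr(Σ^{-2}Γ) + φ(‖ȳ − y‖²_{Σ^{-2}}, ‖y^m − ȳ‖_{Σ^{-2}}) + log α and φ(a,b) = a/2 + b√a. -/

import Mathlib

open Matrix

set_option linter.unusedSectionVars false

namespace PsiAux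

variable {m : Type*} [Fintype m] [DecidableEq m]

lemma herm_transpose {M : Matrix m m ℝ} (hM : M.IsHermitian) : Mᵀ = M := by
  ext i j
  simpa using congrFun (congrFun hM i) j

lemma dot_factor (B : Matrix m m ℝ) (a b : m → ℝ) :
    a ⬝ᵥ (Bᴴ * B) *ᵥ b = (B *ᵥ a) ⬝ᵥ (B *ᵥ b) := by
  rw [← mulVec_mulVec, dotProduct_mulVec, vecMul_conjTranspose]
  simp

open scoped MatrixOrder in
lemma cs {M : Matrix m m ℝ} (hM : M.PosSemidef) (u v : m → ℝ) :
    (u ⬝ᵥ M *ᵥ v) ^ 2 ≤ (u ⬝ᵥ M *ᵥ u) * (v ⬝ᵥ M *ᵥ v) := by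
  obtain ⟨B, rfl⟩ := CStarAlgebra.nonneg_iff_eq_star_mul_self.mp hM.nonneg
  simp only [star_eq_conjTranspose]
  rw [dot_factor, dot_factor, dot_factor]
  simpa [dotProduct, pow_two] using
    Finset.sum_mul_sq_le_sq_mul_sq Finset.univ (B *ᵥ u) (B *ᵥ v)

lemma dot_symm {M : Matrix m m ℝ} (hM : M.IsHermitian) (p q : m → ℝ) :
    p ⬝ᵥ M *ᵥ q = q ⬝ᵥ M *ᵥ p := by
  have h : p ᵥ* M = M *ᵥ p := by
    conv_lhs => rw [← herm_transpose hM]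
    exact vecMul_transpose M p
  rw [dotProduct_mulVec, h, dotProduct_comm]

lemma psd_dot_nonneg {M : Matrix m m ℝ} (hM : M.PosSemidef) (w : m → ℝ) :
    0 ≤ w ⬝ᵥ M *ᵥ w := by simpa using hM.dotProduct_mulVec_nonneg w

lemma inv_quad_le {X Y : Matrix m m ℝ} (hX : X.PosDef) (hY : Y.PosDef)
    (hle : (Y - X).PosSemidef) (w : m → ℝ) :
    w ⬝ᵥ Y⁻¹ *ᵥ w ≤ w ⬝ᵥ X⁻¹ *ᵥ w := by
  set u := Y⁻¹ *ᵥ w with hu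
  set v := X⁻¹ *ᵥ w with hv
  have hYu : Y *ᵥ u = w := by
    rw [hu, mulVec_mulVec, Matrix.mul_nonsing_inv _ (isUnit_iff_ne_zero.mpr hY.det_pos.ne'),
      one_mulVec]
  have hXv : X *ᵥ v = w := by
    rw [hv, mulVec_mulVec, Matrix.mul_nonsing_inv _ (isUnit_iff_ne_zero.mpr hX.det_pos.ne'),
      one_mulVec]
  have hs0 : 0 ≤ w ⬝ᵥ u := psd_dot_nonneg hY.inv.posSemidef w
  have ht0 : 0 ≤ w ⬝ᵥ v := psd_dot_nonneg hX.inv.posSemidef w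
  have huXu : u ⬝ᵥ X *ᵥ u ≤ w ⬝ᵥ u := by
    have h1 : 0 ≤ u ⬝ᵥ (Y - X) *ᵥ u := psd_dot_nonneg hle u
    have h2 : u ⬝ᵥ Y *ᵥ u = w ⬝ᵥ u := by rw [hYu, dotProduct_comm]
    rw [sub_mulVec, dotProduct_sub] at h1
    linarith
  have h := cs hX.posSemidef u v
  have e1 : u ⬝ᵥ X *ᵥ v = w ⬝ᵥ u := by rw [hXv]; exact dotProduct_comm u w
  have e2 : v ⬝ᵥ X *ᵥ v = w ⬝ᵥ v := by rw [hXv]; exact dotProduct_comm v w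
  rw [e1, e2] at h
  nlinarith [h, huXu, hs0, ht0]

open scoped MatrixOrder in
lemma logdet_le_trace {A Γ : Matrix m m ℝ} (hA : A.PosDef) (hΓ : Γ.PosSemidef) :
    Real.log ((A + Γ).det / A.det) ≤ (A⁻¹ * Γ).trace := by
  set R := CFC.sqrt A⁻¹ with hRdef
  have hRR : R * R = A⁻¹ := CFC.sqrt_mul_sqrt_self _ hA.inv.posSemidef.nonneg
  have hRh : Rᴴ = R := (CFC.sqrt_nonneg A⁻¹).posSemidef.isHermitian
  have hB : (R * Γ * R).PosSemidef := by
    have := hΓ.mul_mul_conjTranspose_same R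
    rwa [hRh] at this
  set B := R * Γ * R with hBdef
  have hH := hB.isHermitian
  set Ug := hH.eigenvectorUnitary with hUg
  set U : Matrix m m ℝ := (Ug : Matrix m m ℝ) with hUdef
  have hUU : star U * U = 1 := Unitary.coe_star_mul_self Ug
  have hUU' : U * star U = 1 := Unitary.coe_mul_star_self Ug
  set f : m → ℝ := hH.eigenvalues with hf
  have hf0 : ∀ i, 0 ≤ f i := hB.eigenvalues_nonneg
  have hspec : B = U * diagonal (RCLike.ofReal ∘ f) * star U := hH.spectral_theorem
  have hdiag : diagonal (RCLike.ofReal ∘ f) = diagonal f := by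
    rw [RCLike.ofReal_real_eq_id]; rfl
  rw [hdiag] at hspec
  -- ratio equals det (1 + B)
  have hratio : (A + Γ).det / A.det = (1 + B).det := by
    have h1 : A⁻¹ * (A + Γ) = 1 + A⁻¹ * Γ := by
      rw [Matrix.mul_add, Matrix.nonsing_inv_mul _ (isUnit_iff_ne_zero.mpr hA.det_pos.ne')]
    have h2 : (A⁻¹ * (A + Γ)).det = A.det⁻¹ * (A + Γ).det := by
      rw [det_mul, Matrix.det_nonsing_inv, Ring.inverse_eq_inv']
    have h3 : (1 + A⁻¹ * Γ).det = (1 + B).det := by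
      rw [← hRR, Matrix.mul_assoc, Matrix.det_one_add_mul_comm, hBdef, Matrix.mul_assoc]
    rw [div_eq_inv_mul, ← h2, h1, h3]
  have hdetconj : ∀ X : Matrix m m ℝ, (U * X * star U).det = X.det := by
    intro X
    rw [Matrix.det_mul_comm, ← Matrix.mul_assoc, hUU, Matrix.one_mul]
  have hone : (1 : Matrix m m ℝ) + B = U * (1 + diagonal f) * star U := by
    rw [Matrix.mul_add, Matrix.add_mul, Matrix.mul_one, hUU', ← hspec]
  have hdet : (1 + B).det = ∏ i, (1 + f i) := by
    rw [hone, hdetconj, ← diagonal_one, diagonal_add, det_diagonal]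
  have htr : B.trace = ∑ i, f i := by
    conv_lhs => rw [hspec]
    rw [Matrix.trace_mul_cycle, hUU, Matrix.one_mul, trace_diagonal]
  have htrB : B.trace = (A⁻¹ * Γ).trace := by
    rw [hBdef, Matrix.trace_mul_cycle, hRR]
  have hprodpos : 0 < ∏ i, (1 + f i) :=
    Finset.prod_pos fun i _ => by linarith [hf0 i]
  have hle : ∏ i, (1 + f i) ≤ Real.exp (∑ i, f i) := by
    rw [Real.exp_sum]
    exact Finset.prod_le_prod (fun i _ => by linarith [hf0 i])
      (fun i _ => by linarith [Real.add_one_le_exp (f i)])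
  rw [hratio, hdet, ← htrB, htr]
  exact (Real.log_le_iff_le_exp hprodpos).mpr hle

end PsiAux


open PsiAux in
/-- For `Σ` symmetric positive definite, `Γ` symmetric positive semidefinite,
vectors `y^m, y, ȳ ∈ ℝ^m` and `α ≥ 1`:
`log(det(Σ²+Γ)/det(Σ²)) − ‖y^m−y‖²_{Σ⁻²} + ‖y^m−ȳ‖²_{(Σ²+Γ)⁻¹} + 2 log α ≤ 2ψ`,
with `ψ = (1/2)tr(Σ⁻²Γ) + φ(‖ȳ−y‖²_{Σ⁻²}, ‖y^m−ȳ‖_{Σ⁻²}) + log α`,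
`φ(a,b) = a/2 + b√a`. -/
theorem log_ratio_le_two_psi {m : Type*} [Fintype m] [DecidableEq m]
    (S Γ : Matrix m m ℝ) (hS : S.PosDef) (hΓ : Γ.PosSemidef)
    (ym y ybar : m → ℝ) (α : ℝ) (hα : 1 ≤ α) :
    Real.log ((S ^ 2 + Γ).det / (S ^ 2).det)
        - (ym - y) ⬝ᵥ ((S ^ 2)⁻¹ *ᵥ (ym - y))
        + (ym - ybar) ⬝ᵥ ((S ^ 2 + Γ)⁻¹ *ᵥ (ym - ybar))
        + 2 * Real.log α ≤
      2 * ((1 / 2) * ((S ^ 2)⁻¹ * Γ).trace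
        + (((ybar - y) ⬝ᵥ ((S ^ 2)⁻¹ *ᵥ (ybar - y))) / 2
          + Real.sqrt ((ym - ybar) ⬝ᵥ ((S ^ 2)⁻¹ *ᵥ (ym - ybar)))
            * Real.sqrt ((ybar - y) ⬝ᵥ ((S ^ 2)⁻¹ *ᵥ (ybar - y))))
        + Real.log α) := by
  have hA : (S ^ 2).PosDef := by
    refine .of_dotProduct_mulVec_pos (hS.posSemidef.pow 2).isHermitian fun x hx => ?_
    have hSx : S *ᵥ x ≠ 0 := by
      intro h
      apply hx
      have h2 := congrArg (fun v => S⁻¹ *ᵥ v) h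
      simpa [mulVec_mulVec,
        Matrix.nonsing_inv_mul _ (isUnit_iff_ne_zero.mpr hS.det_pos.ne')] using h2
    have key : star x ⬝ᵥ (S ^ 2) *ᵥ x = star (S *ᵥ x) ⬝ᵥ (S *ᵥ x) := by
      have h := PsiAux.dot_factor S x x
      rw [hS.isHermitian.eq] at h
      simpa [pow_two] using h
    rw [key]
    exact dotProduct_star_self_pos_iff.mpr hSx
  have hC : (S ^ 2 + Γ).PosDef := hA.add_posSemidef hΓ
  have hN : ((S ^ 2)⁻¹ : Matrix m m ℝ).PosSemidef := hA.inv.posSemidef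
  have h1 : Real.log ((S ^ 2 + Γ).det / (S ^ 2).det) ≤ ((S ^ 2)⁻¹ * Γ).trace :=
    logdet_le_trace hA hΓ
  have h2 : (ym - ybar) ⬝ᵥ (S ^ 2 + Γ)⁻¹ *ᵥ (ym - ybar)
      ≤ (ym - ybar) ⬝ᵥ (S ^ 2)⁻¹ *ᵥ (ym - ybar) :=
    inv_quad_le hA hC (by rw [add_sub_cancel_left]; exact hΓ) (ym - ybar)
  have hexp : (ym - y) ⬝ᵥ (S ^ 2)⁻¹ *ᵥ (ym - y)
      = (ym - ybar) ⬝ᵥ (S ^ 2)⁻¹ *ᵥ (ym - ybar)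
        + 2 * ((ym - ybar) ⬝ᵥ (S ^ 2)⁻¹ *ᵥ (ybar - y))
        + (ybar - y) ⬝ᵥ (S ^ 2)⁻¹ *ᵥ (ybar - y) := by
    have hsplit : ym - y = (ym - ybar) + (ybar - y) := by
      rw [sub_add_sub_cancel]
    rw [hsplit, mulVec_add, dotProduct_add, add_dotProduct, add_dotProduct,
      dot_symm hN.isHermitian (ybar - y) (ym - ybar)]
    ring
  have ha0 : 0 ≤ (ybar - y) ⬝ᵥ (S ^ 2)⁻¹ *ᵥ (ybar - y) := psd_dot_nonneg hN _
  have hb0 : 0 ≤ (ym - ybar) ⬝ᵥ (S ^ 2)⁻¹ *ᵥ (ym - ybar) := psd_dot_nonneg hN _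
  have h4 : -((ym - ybar) ⬝ᵥ (S ^ 2)⁻¹ *ᵥ (ybar - y))
      ≤ Real.sqrt ((ym - ybar) ⬝ᵥ (S ^ 2)⁻¹ *ᵥ (ym - ybar))
        * Real.sqrt ((ybar - y) ⬝ᵥ (S ^ 2)⁻¹ *ᵥ (ybar - y)) := by
    have hcs := cs hN (ym - ybar) (ybar - y)
    have habs : |(ym - ybar) ⬝ᵥ (S ^ 2)⁻¹ *ᵥ (ybar - y)|
        ≤ Real.sqrt (((ym - ybar) ⬝ᵥ (S ^ 2)⁻¹ *ᵥ (ym - ybar))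
            * ((ybar - y) ⬝ᵥ (S ^ 2)⁻¹ *ᵥ (ybar - y))) :=
      Real.abs_le_sqrt hcs
    rw [Real.sqrt_mul hb0] at habs
    linarith [neg_abs_le ((ym - ybar) ⬝ᵥ (S ^ 2)⁻¹ *ᵥ (ybar - y))]
  linarith [h1, h2, hexp, h4, ha0]
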